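/- Acceptability of an assumption under the preferred semantics is a disjunctive property in frameworks with at least 4 assumptions: with base rules R = {contrary(B) ← A, D ← C}, witness rules R_1 = {contrary(A) ← C}, R_2 = {contrary(A) ← D}, the assumption B belongs to some preferred extension of the framework with rule set R ∪ S for every nonempty S ⊆ {R_1, R_2}, but belongs to no preferred extension when S = {}. -/

import Mathlib

/-- A Bipolar ABA rule `head ← body` (body is a single assumption). -/
structure ABARule (S : Type) where
  head : S
  body : S

/-- `Derives R a b`: there is a deduction (chain of rules in `R`) from `a` to `b`. -/
def Derives {S : Type} (R : Set (ABARule S)) : S → S → Prop :=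
  Relation.ReflTransGen fun a b => (⟨b, a⟩ : ABARule S) ∈ R

/-- `Δ` attacks `β` iff the contrary of `β` is deducible from some member of `Δ`. -/
def Attacks {S : Type} (co : S → S) (R : Set (ABARule S)) (Delta : Set S) (b : S) : Prop :=
  ∃ a ∈ Delta, Derives R a (co b)

/-- `Δ` attacks set `B` iff it attacks some member of `B`. -/
def AttacksSet {S : Type} (co : S → S) (R : Set (ABARule S)) (Delta B : Set S) : Prop :=
  ∃ b ∈ B, Attacks co R Delta b

/-- `Δ` is conflict-free iff it does not attack itself. -/
def ConflictFree {S : Type} (co : S → S) (R : Set (ABARule S)) (Delta : Set S) : Prop :=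
  ¬ AttacksSet co R Delta Delta

/-- Deductive closure of `Δ` within the assumptions `asm`. -/
def Cl {S : Type} (asm : Set S) (R : Set (ABARule S)) (Delta : Set S) : Set S :=
  {a | a ∈ asm ∧ ∃ d ∈ Delta, Derives R d a}

/-- `Δ` is closed iff `Δ = Cl(Δ)`. -/
def BABAClosed {S : Type} (asm : Set S) (R : Set (ABARule S)) (Delta : Set S) : Prop :=
  Cl asm R Delta = Delta

/-- Admissibility: closed, conflict-free, and counter-attacks every closed attacker. -/
def Admissible {S : Type} (asm : Set S) (co : S → S) (R : Set (ABARule S))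
    (Delta : Set S) : Prop :=
  Delta ⊆ asm ∧ BABAClosed asm R Delta ∧ ConflictFree co R Delta ∧
    ∀ B ⊆ asm, BABAClosed asm R B → AttacksSet co R B Delta → AttacksSet co R Delta B

/-- Preferred: ⊆-maximally admissible. -/
def Preferred {S : Type} (asm : Set S) (co : S → S) (R : Set (ABARule S))
    (Delta : Set S) : Prop :=
  Admissible asm co R Delta ∧
    ∀ D', Admissible asm co R D' → Delta ⊆ D' → D' = Delta

/-- `Δ` defends `α` iff `Δ` attacks every closed set attacking `α`. -/
def Defends {S : Type} (asm : Set S) (co : S → S) (R : Set (ABARule S))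
    (Delta : Set S) (a : S) : Prop :=
  ∀ B ⊆ asm, BABAClosed asm R B → Attacks co R B a → AttacksSet co R Delta B

/-- Complete: admissible and containing exactly the assumptions it defends. -/
def CompleteExt {S : Type} (asm : Set S) (co : S → S) (R : Set (ABARule S))
    (Delta : Set S) : Prop :=
  Admissible asm co R Delta ∧ Delta = {a | a ∈ asm ∧ Defends asm co R Delta a}

/-- Set-stable: closed, conflict-free, attacking `Cl({β})` for every `β` outside. -/
def SetStable {S : Type} (asm : Set S) (co : S → S) (R : Set (ABARule S))
    (Delta : Set S) : Prop :=
  Delta ⊆ asm ∧ BABAClosed asm R Delta ∧ ConflictFree co R Delta ∧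
    ∀ b ∈ asm, b ∉ Delta → AttacksSet co R Delta (Cl asm R {b})

/-- Well-founded extension: the intersection of all complete extensions. -/
def WellFoundedExt {S : Type} (asm : Set S) (co : S → S) (R : Set (ABARule S))
    (Delta : Set S) : Prop :=
  Delta = ⋂₀ {B | CompleteExt asm co R B}

/-- Ideal: ⊆-maximal among admissible sets contained in all preferred extensions. -/
def IdealExt {S : Type} (asm : Set S) (co : S → S) (R : Set (ABARule S))
    (Delta : Set S) : Prop :=
  (Admissible asm co R Delta ∧ ∀ B, Preferred asm co R B → Delta ⊆ B) ∧
    ∀ D', (Admissible asm co R D' ∧ ∀ B, Preferred asm co R B → D' ⊆ B) →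
      Delta ⊆ D' → D' = Delta

/-- Quota rule: keep the rules accepted by at least `q` agents. -/
def QuotaAgg {S : Type} {n : ℕ} (Rs : Fin n → Set (ABARule S)) (q : ℕ) :
    Set (ABARule S) :=
  {r | ∃ N' : Finset (Fin n), q ≤ N'.card ∧ ∀ i ∈ N', r ∈ Rs i}

/-- Oligarchic rule: keep the rules accepted by all veto agents. -/
def OligAgg {S : Type} {n : ℕ} (Rs : Fin n → Set (ABARule S)) (Nv : Set (Fin n)) :
    Set (ABARule S) :=
  {r | ∀ j ∈ Nv, r ∈ Rs j}

abbrev Sen4 := Fin 4 ⊕ Fin 4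

def cmap4 : Sen4 → Sen4
  | .inl i => .inr i
  | .inr i => .inr i

def asm4 : Set Sen4 := Set.range Sum.inl

def R11 : Set (ABARule Sen4) := {⟨.inr 1, .inl 0⟩, ⟨.inl 3, .inl 2⟩}

def r11a : ABARule Sen4 := ⟨.inr 0, .inl 2⟩
def r11b : ABARule Sen4 := ⟨.inr 0, .inl 3⟩


def Rfull : Set (ABARule Sen4) := R11 ∪ {r11a, r11b}

lemma step_full {a b : Sen4} (h : (⟨b, a⟩ : ABARule Sen4) ∈ Rfull) :
    (a = .inl 0 ∧ b = .inr 1) ∨ (a = .inl 2 ∧ b = .inl 3) ∨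
    (a = .inl 2 ∧ b = .inr 0) ∨ (a = .inl 3 ∧ b = .inr 0) := by
  simp only [Rfull, R11, r11a, r11b, Set.mem_union, Set.mem_insert_iff,
    Set.mem_singleton_iff, ABARule.mk.injEq] at h
  tauto

lemma full_reach {x y : Sen4} (h : Derives Rfull x y) :
    x = y ∨ (x = .inl 0 ∧ y = .inr 1) ∨ (x = .inl 2 ∧ y = .inl 3) ∨
    (x = .inl 2 ∧ y = .inr 0) ∨ (x = .inl 3 ∧ y = .inr 0) := by
  induction h with
  | refl => left; rfl
  | tail hab hbc ih =>
      rcases step_full hbc with ⟨hb, hc⟩|⟨hb,hc⟩|⟨hb,hc⟩|⟨hb,hc⟩ <;>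
        subst hc <;> subst hb <;>
        rcases ih with h|⟨h1,h2⟩|⟨h1,h2⟩|⟨h1,h2⟩|⟨h1,h2⟩ <;> simp_all

lemma step_R11 {a b : Sen4} (h : (⟨b, a⟩ : ABARule Sen4) ∈ R11) :
    (a = .inl 0 ∧ b = .inr 1) ∨ (a = .inl 2 ∧ b = .inl 3) := by
  simp only [R11, Set.mem_insert_iff, Set.mem_singleton_iff, ABARule.mk.injEq] at h
  tauto

lemma R11_reach {x y : Sen4} (h : Derives R11 x y) :
    x = y ∨ (x = .inl 0 ∧ y = .inr 1) ∨ (x = .inl 2 ∧ y = .inl 3) := by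
  induction h with
  | refl => left; rfl
  | tail hab hbc ih =>
      rcases step_R11 hbc with ⟨hb, hc⟩|⟨hb,hc⟩ <;>
        subst hc <;> subst hb <;>
        rcases ih with h|⟨h1,h2⟩|⟨h1,h2⟩ <;> simp_all

def D0 : Set Sen4 := {Sum.inl 1, Sum.inl 2, Sum.inl 3}

lemma mem_D0 {x : Sen4} :
    x ∈ D0 ↔ x = Sum.inl 1 ∨ x = Sum.inl 2 ∨ x = Sum.inl 3 := by
  simp [D0]

theorem preferredAcceptability_disjunctive :
    ∀ T ⊆ ({r11a, r11b} : Set (ABARule Sen4)),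
      (T ≠ ∅ →
        ∃ Delta, Preferred asm4 cmap4 (R11 ∪ T) Delta ∧ (Sum.inl 1 : Sen4) ∈ Delta) ∧
      (T = ∅ →
        ∀ Delta, Preferred asm4 cmap4 (R11 ∪ T) Delta → (Sum.inl 1 : Sen4) ∉ Delta) := by
  intro T hT
  have hsub : R11 ∪ T ⊆ Rfull := Set.union_subset_union_right R11 hT
  have hmono : ∀ {x y : Sen4}, Derives (R11 ∪ T) x y → Derives Rfull x y :=
    fun h => Relation.ReflTransGen.mono (fun a b hab => hsub hab) _ _ h
  constructor
  · intro hne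
    have hw : r11a ∈ T ∨ r11b ∈ T := by
      obtain ⟨x, hx⟩ := Set.nonempty_iff_ne_empty.mpr hne
      rcases hT hx with h | h
      · left; rwa [h] at hx
      · right; rw [Set.mem_singleton_iff] at h; rwa [h] at hx
    have hatkA : ∃ a ∈ D0, Derives (R11 ∪ T) a (Sum.inr 0) := by
      rcases hw with h | h
      · exact ⟨Sum.inl 2, mem_D0.mpr (Or.inr (Or.inl rfl)),
          Relation.ReflTransGen.single (Set.mem_union_right _ h)⟩
      · exact ⟨Sum.inl 3, mem_D0.mpr (Or.inr (Or.inr rfl)),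
          Relation.ReflTransGen.single (Set.mem_union_right _ h)⟩
    have hD0asm : D0 ⊆ asm4 := by
      intro a ha
      rcases mem_D0.mp ha with rfl | rfl | rfl <;> exact ⟨_, rfl⟩
    have hadm : Admissible asm4 cmap4 (R11 ∪ T) D0 := by
      refine ⟨hD0asm, ?_, ?_, ?_⟩
      · ext a
        constructor
        · rintro ⟨⟨j, rfl⟩, d, hd, hder⟩
          have h := full_reach (hmono hder)
          clear hder hmono hsub hatkA hw hne hT
          rcases mem_D0.mp hd with rfl | rfl | rfl <;>
            rcases h with h | ⟨h1, h2⟩ | ⟨h1, h2⟩ | ⟨h1, h2⟩ | ⟨h1, h2⟩ <;>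
            simp_all [mem_D0]
        · intro ha
          exact ⟨hD0asm ha, a, ha, Relation.ReflTransGen.refl⟩
      · rintro ⟨b, hb, a, ha, hder⟩
        have h := full_reach (hmono hder)
        clear hder hmono hsub hatkA hw hne hT
        rcases mem_D0.mp hb with rfl | rfl | rfl <;>
          rcases mem_D0.mp ha with rfl | rfl | rfl <;>
          simp only [cmap4] at h <;>
          rcases h with h | ⟨h1, h2⟩ | ⟨h1, h2⟩ | ⟨h1, h2⟩ | ⟨h1, h2⟩ <;>
          simp_all
      · rintro B hB hBc ⟨b, hb, a, ha, hder⟩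
        have h := full_reach (hmono hder)
        have h0 : Sum.inl 0 ∈ B := by
          obtain ⟨j, rfl⟩ := hB ha
          clear hder hmono hsub hatkA hw hne hT hBc
          rcases mem_D0.mp hb with rfl | rfl | rfl <;>
            simp only [cmap4] at h <;>
            rcases h with h | ⟨h1, h2⟩ | ⟨h1, h2⟩ | ⟨h1, h2⟩ | ⟨h1, h2⟩ <;>
            first | (exact h1 ▸ ha) | simp_all
        obtain ⟨c, hc, hcd⟩ := hatkA
        show ∃ b ∈ B, ∃ a ∈ D0, Derives (R11 ∪ T) a (cmap4 b)
        exact ⟨Sum.inl 0, h0, c, hc, hcd⟩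
    refine ⟨D0, ⟨hadm, ?_⟩, mem_D0.mpr (Or.inl rfl)⟩
    intro D' hD' hsub'
    obtain ⟨hD'asm, _, hcf, _⟩ := hD'
    have h0 : Sum.inl 0 ∉ D' := by
      intro h
      refine hcf ⟨Sum.inl 1, hsub' (mem_D0.mpr (Or.inl rfl)), Sum.inl 0, h, ?_⟩
      have hco : cmap4 (Sum.inl (1 : Fin 4)) = Sum.inr 1 := rfl
      rw [hco]
      exact Relation.ReflTransGen.single (Set.mem_union_left _ (by simp [R11]))
    apply Set.Subset.antisymm _ hsub'
    intro a ha
    obtain ⟨j, rfl⟩ := hD'asm ha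
    fin_cases j
    · exact absurd ha h0
    · exact mem_D0.mpr (Or.inl rfl)
    · exact mem_D0.mpr (Or.inr (Or.inl rfl))
    · exact mem_D0.mpr (Or.inr (Or.inr rfl))
  · rintro rfl Delta ⟨⟨hasm, hcl, hcf, hdef⟩, _⟩ hBmem
    rw [Set.union_empty] at hdef
    have hB'cl : BABAClosed asm4 R11 {Sum.inl 0} := by
      ext a
      constructor
      · rintro ⟨⟨j, rfl⟩, d, rfl, hder⟩
        rcases R11_reach hder with h | ⟨h1, h2⟩ | ⟨h1, h2⟩ <;> simp_all
      · rintro rfl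
        exact ⟨⟨_, rfl⟩, _, rfl, Relation.ReflTransGen.refl⟩
    have hatk : AttacksSet cmap4 R11 {Sum.inl 0} Delta := by
      refine ⟨Sum.inl 1, hBmem, Sum.inl 0, rfl, ?_⟩
      have hco : cmap4 (Sum.inl (1 : Fin 4)) = Sum.inr 1 := rfl
      rw [hco]
      exact Relation.ReflTransGen.single (by simp [R11])
    obtain ⟨b, hb, a, ha, hder⟩ :=
      hdef {Sum.inl 0} (by rintro x rfl; exact ⟨_, rfl⟩) hB'cl hatk
    rw [Set.mem_singleton_iff] at hb
    subst hb
    have hco : cmap4 (Sum.inl (0 : Fin 4)) = Sum.inr 0 := rfl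
    rw [hco] at hder
    obtain ⟨j, rfl⟩ := hasm ha
    rcases R11_reach hder with h | ⟨h1, h2⟩ | ⟨h1, h2⟩ <;> simp_all
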